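/- Let γ > 1 and c₀ > 0 be constants, let b₁ = √(2c₀/(γ+1)), and let N > 1 be a real number. Then there exists a unique b₀ with 0 < b₀ < b₁ satisfying the algebraic equation b₀^{γ−1} (c₀ − ((γ−1)/2) b₀²) N^{γ−1} = b₁^{γ+1}. -/

import Mathlib

/-- For γ > 1, c₀ > 0, b₁ = √(2c₀/(γ+1)) and N > 1, there exists a unique
b₀ with 0 < b₀ < b₁ satisfying b₀^(γ−1) (c₀ − ((γ−1)/2) b₀²) N^(γ−1) = b₁^(γ+1). -/
theorem unique_entry_speed (γ c₀ N : ℝ) (hγ : 1 < γ) (hc₀ : 0 < c₀) (hN : 1 < N)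
    (b₁ : ℝ) (hb₁ : b₁ = Real.sqrt (2 * c₀ / (γ + 1))) :
    ∃! b₀ : ℝ, 0 < b₀ ∧ b₀ < b₁ ∧
      b₀ ^ (γ - 1) * (c₀ - (γ - 1) / 2 * b₀ ^ 2) * N ^ (γ - 1) = b₁ ^ (γ + 1) := by
  have hγ0 : (0:ℝ) < γ - 1 := by linarith
  have hγ1 : (0:ℝ) < γ + 1 := by linarith
  have harg : (0:ℝ) < 2 * c₀ / (γ + 1) := by positivity
  have hb1pos : 0 < b₁ := by rw [hb₁]; exact Real.sqrt_pos.mpr harg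
  have hb1sq : b₁ ^ 2 = 2 * c₀ / (γ + 1) := by
    rw [hb₁, Real.sq_sqrt harg.le]
  set f : ℝ → ℝ := fun b => b ^ (γ - 1) * (c₀ - (γ - 1) / 2 * b ^ 2) * N ^ (γ - 1) with hf
  -- continuity
  have hcont : ContinuousOn f (Set.Icc 0 b₁) := by
    apply ContinuousOn.mul
    apply ContinuousOn.mul
    · exact fun x _ => (Real.continuousAt_rpow_const x (γ - 1) (Or.inr hγ0.le)).continuousWithinAt
    · fun_prop
    · fun_prop
  -- strict monotonicity
  have hmono : StrictMonoOn f (Set.Icc 0 b₁) := by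
    apply strictMonoOn_of_deriv_pos (convex_Icc 0 b₁) hcont
    intro x hx
    rw [interior_Icc] at hx
    obtain ⟨hx0, hxb⟩ := hx
    have hderiv : HasDerivAt f
        ((γ - 1) * x ^ (γ - 2) * (c₀ - (γ + 1) / 2 * x ^ 2) * N ^ (γ - 1)) x := by
      have h1 : HasDerivAt (fun b : ℝ => b ^ (γ - 1)) ((γ - 1) * x ^ (γ - 1 - 1)) x :=
        Real.hasDerivAt_rpow_const (Or.inl hx0.ne')
      have h2 : HasDerivAt (fun b : ℝ => c₀ - (γ - 1) / 2 * b ^ 2) (-((γ - 1) * x)) x := by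
        have : HasDerivAt (fun b : ℝ => b ^ 2) (2 * x) x := by
          simpa using hasDerivAt_pow 2 x
        have := ((this.const_mul ((γ - 1) / 2)).const_sub c₀)
        exact this.congr_deriv (by ring)
      have h3 := (h1.mul h2).mul_const (N ^ (γ - 1))
      refine h3.congr_deriv (Eq.symm ?_)
      have e1 : x ^ (γ - 1) * x = x ^ γ := by
        rw [← Real.rpow_add_one hx0.ne']; ring_nf
      have e2 : x ^ (γ - 2) * x ^ 2 = x ^ γ := by
        rw [← Real.rpow_two, ← Real.rpow_add hx0]; ring_nf
      have e3 : x ^ (γ - 1 - 1) = x ^ (γ - 2) := by ring_nf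
      rw [e3]
      linear_combination ((γ - 1) * N ^ (γ - 1)) * e1 - ((γ - 1) * N ^ (γ - 1)) * e2
    rw [hderiv.deriv]
    have hx2 : x ^ 2 < 2 * c₀ / (γ + 1) := by
      rw [← hb1sq]
      exact pow_lt_pow_left₀ hxb hx0.le (by norm_num)
    have hpos1 : 0 < c₀ - (γ + 1) / 2 * x ^ 2 := by
      have : (γ + 1) / 2 * x ^ 2 < (γ + 1) / 2 * (2 * c₀ / (γ + 1)) := by
        apply mul_lt_mul_of_pos_left hx2; positivity
      have heq : (γ + 1) / 2 * (2 * c₀ / (γ + 1)) = c₀ := by field_simp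
      linarith [heq ▸ this]
    have := Real.rpow_pos_of_pos hx0 (γ - 2)
    have := Real.rpow_pos_of_pos (lt_trans one_pos hN) (γ - 1)
    positivity
  -- endpoint values
  have hf0 : f 0 = 0 := by
    simp [hf, Real.zero_rpow hγ0.ne']
  have hfb1 : f b₁ = b₁ ^ (γ + 1) * N ^ (γ - 1) := by
    have hinner : c₀ - (γ - 1) / 2 * b₁ ^ 2 = b₁ ^ 2 := by
      rw [hb1sq]; field_simp; ring
    have : b₁ ^ (γ - 1) * b₁ ^ 2 = b₁ ^ (γ + 1) := by
      rw [← Real.rpow_two, ← Real.rpow_add hb1pos]; ring_nf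
    simp only [hf]
    rw [hinner, this]
  have hNpow : 1 < N ^ (γ - 1) :=
    Real.one_lt_rpow_iff_of_pos (lt_trans one_pos hN) |>.mpr (Or.inl ⟨hN, hγ0⟩)
  have ht : b₁ ^ (γ + 1) ∈ Set.Ioo (f 0) (f b₁) := by
    constructor
    · rw [hf0]; exact Real.rpow_pos_of_pos hb1pos _
    · rw [hfb1]
      have hp := Real.rpow_pos_of_pos hb1pos (γ + 1)
      nlinarith
  obtain ⟨b₀, hb₀mem, hfb₀⟩ := intermediate_value_Ioo hb1pos.le hcont ht
  refine ⟨b₀, ⟨hb₀mem.1, hb₀mem.2, hfb₀⟩, ?_⟩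
  rintro x ⟨hx0, hxb, hfx⟩
  exact hmono.injOn (Set.mem_Icc.mpr ⟨hx0.le, hxb.le⟩)
    (Set.mem_Icc.mpr ⟨hb₀mem.1.le, hb₀mem.2.le⟩) (by rw [show f x = _ from hfx, hfb₀])
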